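/- Let Ω ⊆ ℝ^n be a Lebesgue-measurable set, G : Ω × Ω → ℝ a nonnegative measurable function, ρ : Ω → ℝ a nonnegative measurable function, λ > 0, and let p ∈ (1, ∞) with conjugate exponent q = p/(p−1). Suppose u : Ω → ℝ is measurable, u(x) > 0 for almost every x ∈ Ω, 0 < ∫_Ω ρ(x)^q u(x)^q dx < ∞, and u(x) = λ ∫_Ω G(x,ξ) ρ(ξ) u(ξ) dξ for almost every x ∈ Ω. Then λ^q · ∫_Ω ρ(x)^q ( ∫_Ω G(x,ξ)^p dξ )^{q/p} dx ≥ 1, where the iterated integral is taken in [0,∞]. Equivalently, λ ≥ ( ∫_Ω ρ(x)^q ( ∫_Ω G(x,ξ)^p dξ )^{q/p} dx )^{-1/q}. -/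

import Mathlib

open MeasureTheory

/-- Hölder-inequality lower bound for the eigenvalue of a weighted
integral-operator eigenfunction equation. -/
theorem eigenvalue_lower_bound_holder
    {n : ℕ} (Ω : Set (EuclideanSpace ℝ (Fin n))) (hΩ : MeasurableSet Ω)
    (G : EuclideanSpace ℝ (Fin n) → EuclideanSpace ℝ (Fin n) → ℝ)
    (hGmeas : Measurable (Function.uncurry G))
    (hGnonneg : ∀ x ∈ Ω, ∀ ξ ∈ Ω, 0 ≤ G x ξ)
    (ρ : EuclideanSpace ℝ (Fin n) → ℝ)
    (hρmeas : Measurable ρ) (hρnonneg : ∀ x ∈ Ω, 0 ≤ ρ x)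
    (lam : ℝ) (hlam : 0 < lam)
    (p q : ℝ) (hp : 1 < p) (hq : q = p / (p - 1))
    (u : EuclideanSpace ℝ (Fin n) → ℝ) (humeas : Measurable u)
    (hupos : ∀ᵐ x ∂(volume.restrict Ω), 0 < u x)
    (hintpos : 0 < ∫⁻ x in Ω, ENNReal.ofReal (ρ x ^ q * u x ^ q))
    (hintfin : (∫⁻ x in Ω, ENNReal.ofReal (ρ x ^ q * u x ^ q)) < ⊤)
    (hrep : ∀ᵐ x ∂(volume.restrict Ω),
      u x = lam * ∫ ξ in Ω, G x ξ * ρ ξ * u ξ) :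
    1 ≤ ENNReal.ofReal (lam ^ q) *
      ∫⁻ x in Ω, ENNReal.ofReal (ρ x ^ q) *
        (∫⁻ ξ in Ω, ENNReal.ofReal (G x ξ ^ p)) ^ (q / p) := by
  have hpq : p.HolderConjugate q := (Real.holderConjugate_iff_eq_conjExponent hp).2 hq
  have hq1 : 1 < q := hpq.symm.lt
  have hq0 : 0 < q := hpq.symm.pos
  have hp0 : 0 < p := hpq.pos
  set I : ENNReal := ∫⁻ x in Ω, ENNReal.ofReal (ρ x ^ q * u x ^ q) with hI
  set B : EuclideanSpace ℝ (Fin n) → ENNReal :=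
    fun x => ∫⁻ ξ in Ω, ENNReal.ofReal (G x ξ ^ p) with hB
  -- a.e. facts in Ω
  have haeΩ : ∀ᵐ x ∂(volume.restrict Ω), x ∈ Ω := ae_restrict_mem hΩ
  -- the ρ^q u^q integral rewritten
  have hIeq : I = ∫⁻ ξ in Ω,
      (ENNReal.ofReal (ρ ξ) * ENNReal.ofReal (u ξ)) ^ q := by
    refine lintegral_congr_ae ?_
    filter_upwards [haeΩ, hupos] with ξ hξ huξ
    rw [← ENNReal.ofReal_mul (hρnonneg ξ hξ),
      ENNReal.ofReal_rpow_of_nonneg (mul_nonneg (hρnonneg ξ hξ) huξ.le) hq0.le,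
      Real.mul_rpow (hρnonneg ξ hξ) huξ.le]
  -- pointwise a.e. bound
  have hkey : ∀ᵐ x ∂(volume.restrict Ω),
      ENNReal.ofReal (ρ x ^ q * u x ^ q) ≤
        ENNReal.ofReal (lam ^ q) *
          ((ENNReal.ofReal (ρ x ^ q) * B x ^ (q / p)) * I) := by
    filter_upwards [haeΩ, hupos, hrep] with x hxΩ hux hrepx
    -- Step 1: ofReal (u x) ≤ ofReal lam * (∫⁻ ofReal (G x ξ * ρ ξ * u ξ))
    have h1 : ENNReal.ofReal (u x) ≤ ENNReal.ofReal lam *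
        ∫⁻ ξ in Ω, ENNReal.ofReal (G x ξ * ρ ξ * u ξ) := by
      rw [hrepx, ENNReal.ofReal_mul hlam.le]
      refine mul_le_mul_right ?_ _
      calc ENNReal.ofReal (∫ ξ in Ω, G x ξ * ρ ξ * u ξ)
          ≤ ‖∫ ξ in Ω, G x ξ * ρ ξ * u ξ‖ₑ := Real.ofReal_le_enorm _
        _ ≤ ∫⁻ ξ in Ω, ‖G x ξ * ρ ξ * u ξ‖ₑ :=
            enorm_integral_le_lintegral_enorm _
        _ = ∫⁻ ξ in Ω, ENNReal.ofReal (G x ξ * ρ ξ * u ξ) := by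
            refine lintegral_congr_ae ?_
            filter_upwards [haeΩ, hupos] with ξ hξ huξ
            exact Real.enorm_eq_ofReal (mul_nonneg
              (mul_nonneg (hGnonneg x hxΩ ξ hξ) (hρnonneg ξ hξ)) huξ.le)
    -- Step 2: Hölder
    have h2 : (∫⁻ ξ in Ω, ENNReal.ofReal (G x ξ * ρ ξ * u ξ)) ≤
        B x ^ (1 / p) * I ^ (1 / q) := by
      have heq : (∫⁻ ξ in Ω, ENNReal.ofReal (G x ξ * ρ ξ * u ξ)) =
          ∫⁻ ξ in Ω, ((fun ξ => ENNReal.ofReal (G x ξ)) *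
            fun ξ => ENNReal.ofReal (ρ ξ) * ENNReal.ofReal (u ξ)) ξ := by
        refine lintegral_congr_ae ?_
        filter_upwards [haeΩ, hupos] with ξ hξ huξ
        simp only [Pi.mul_apply]
        rw [mul_assoc, ENNReal.ofReal_mul (hGnonneg x hxΩ ξ hξ),
          ENNReal.ofReal_mul (hρnonneg ξ hξ)]
      have hBx : B x = ∫⁻ ξ in Ω, ENNReal.ofReal (G x ξ) ^ p := by
        refine lintegral_congr_ae ?_
        filter_upwards [haeΩ] with ξ hξ
        rw [ENNReal.ofReal_rpow_of_nonneg (hGnonneg x hxΩ ξ hξ) hp0.le]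
      rw [heq, hBx, hIeq]
      exact ENNReal.lintegral_mul_le_Lp_mul_Lq _ hpq
        ((ENNReal.measurable_ofReal.comp (hGmeas.of_uncurry_left)).aemeasurable)
        (((ENNReal.measurable_ofReal.comp hρmeas).mul
          (ENNReal.measurable_ofReal.comp humeas)).aemeasurable)
    -- combine and raise to the power q
    have h3 : ENNReal.ofReal (u x) ≤
        ENNReal.ofReal lam * (B x ^ (1 / p) * I ^ (1 / q)) :=
      h1.trans (mul_le_mul_right h2 _)
    have h4 : ENNReal.ofReal (u x) ^ q ≤
        ENNReal.ofReal (lam ^ q) * (B x ^ (q / p) * I) := by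
      calc ENNReal.ofReal (u x) ^ q
          ≤ (ENNReal.ofReal lam * (B x ^ (1 / p) * I ^ (1 / q))) ^ q :=
            ENNReal.rpow_le_rpow h3 hq0.le
        _ = ENNReal.ofReal lam ^ q * ((B x ^ (1 / p)) ^ q * (I ^ (1 / q)) ^ q) := by
            rw [ENNReal.mul_rpow_of_nonneg _ _ hq0.le,
              ENNReal.mul_rpow_of_nonneg _ _ hq0.le]
        _ = ENNReal.ofReal (lam ^ q) * (B x ^ (q / p) * I) := by
            rw [← ENNReal.rpow_mul, ← ENNReal.rpow_mul,
              one_div_mul_cancel hq0.ne', ENNReal.rpow_one,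
              ENNReal.ofReal_rpow_of_nonneg hlam.le hq0.le]
            ring_nf
    calc ENNReal.ofReal (ρ x ^ q * u x ^ q)
        = ENNReal.ofReal (ρ x ^ q) * ENNReal.ofReal (u x) ^ q := by
          rw [ENNReal.ofReal_mul (Real.rpow_nonneg (hρnonneg x hxΩ) q),
            ENNReal.ofReal_rpow_of_nonneg hux.le hq0.le]
      _ ≤ ENNReal.ofReal (ρ x ^ q) *
            (ENNReal.ofReal (lam ^ q) * (B x ^ (q / p) * I)) :=
          mul_le_mul_right h4 _
      _ = ENNReal.ofReal (lam ^ q) *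
            ((ENNReal.ofReal (ρ x ^ q) * B x ^ (q / p)) * I) := by ring
  -- integrate the pointwise bound
  have hmain : I ≤ (ENNReal.ofReal (lam ^ q) *
      ∫⁻ x in Ω, ENNReal.ofReal (ρ x ^ q) * B x ^ (q / p)) * I := by
    calc I ≤ ∫⁻ x in Ω, ENNReal.ofReal (lam ^ q) *
          ((ENNReal.ofReal (ρ x ^ q) * B x ^ (q / p)) * I) := lintegral_mono_ae hkey
      _ = ENNReal.ofReal (lam ^ q) *
          ∫⁻ x in Ω, (ENNReal.ofReal (ρ x ^ q) * B x ^ (q / p)) * I :=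
          lintegral_const_mul' _ _ ENNReal.ofReal_ne_top
      _ = ENNReal.ofReal (lam ^ q) *
          ((∫⁻ x in Ω, ENNReal.ofReal (ρ x ^ q) * B x ^ (q / p)) * I) := by
          rw [lintegral_mul_const' _ _ hintfin.ne]
      _ = _ := by rw [mul_assoc]
  -- cancel I
  by_contra hcon
  push_neg at hcon
  have := ENNReal.mul_lt_mul_left hintpos.ne' hintfin.ne hcon
  rw [one_mul] at this
  exact absurd hmain (not_le.2 this)
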